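/- Let G be a finite connected simple graph with n vertices and m edges, all of whose vertices have degree at least 1. If μ ∈ ℂ is an eigenvalue of T(G) and λ ∈ ℂ satisfies λ² − 2μλ + 1 = 0, then λ is an eigenvalue of the transition matrix U. (Backward direction of Corollary 4.2: every root of X² − 2μX + 1, i.e., λ = μ ± i√(1 − μ²), is an eigenvalue of U.) -/

import Mathlib

open Matrix SimpleGraph Polynomial

/-- The matrix `T(G)`: `T u v = 1 / deg u` if `(u,v)` is a dart of `G`, else `0`. -/
noncomputable def quantumT {V : Type*} [Fintype V] (G : SimpleGraph V)
    [DecidableRel G.Adj] : Matrix V V ℂ :=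
  fun u v => if G.Adj u v then (1 : ℂ) / (G.degree u : ℂ) else 0

/-- The transition matrix `U` of the discrete-time quantum walk on `G`, indexed by darts:
`U e f = 2 / deg (t f)` if `t f = o e` and `f ≠ e⁻¹`, `U e f = 2 / deg (t f) - 1` if
`f = e⁻¹`, and `0` otherwise. -/
noncomputable def quantumU {V : Type*} [Fintype V] (G : SimpleGraph V)
    [DecidableRel G.Adj] [DecidableEq V] : Matrix G.Dart G.Dart ℂ :=
  fun e f =>
    if f.toProd.2 = e.toProd.1 ∧ f ≠ e.symm then (2 : ℂ) / (G.degree f.toProd.2 : ℂ)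
    else if f = e.symm then (2 : ℂ) / (G.degree f.toProd.2 : ℂ) - 1
    else 0

lemma matrix_mem_spectrum_iff {n : Type*} [Fintype n] [DecidableEq n] (M : Matrix n n ℂ) (μ : ℂ) :
    μ ∈ spectrum ℂ M ↔ ∃ v, v ≠ 0 ∧ M.mulVec v = μ • v := by
  rw [spectrum.mem_iff]
  rw [Matrix.isUnit_iff_isUnit_det, isUnit_iff_ne_zero, not_ne_iff,
    ← Matrix.exists_mulVec_eq_zero_iff]
  constructor
  · rintro ⟨v, hv0, hv⟩
    refine ⟨v, hv0, ?_⟩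
    rw [Algebra.algebraMap_eq_smul_one, Matrix.sub_mulVec, Matrix.smul_mulVec,
      Matrix.one_mulVec, sub_eq_zero] at hv
    exact hv.symm
  · rintro ⟨v, hv0, hv⟩
    refine ⟨v, hv0, ?_⟩
    rw [Algebra.algebraMap_eq_smul_one, Matrix.sub_mulVec, Matrix.smul_mulVec,
      Matrix.one_mulVec, sub_eq_zero, hv]

lemma dart_sum {V : Type*} [Fintype V] [DecidableEq V] (G : SimpleGraph V)
    [DecidableRel G.Adj] (u : V) (g : V → ℂ) :
    ∑ f : G.Dart, (if f.toProd.2 = u then g f.toProd.1 else 0)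
      = ∑ w ∈ G.neighborFinset u, g w := by
  rw [← Finset.sum_filter]
  refine Finset.sum_bij' (fun f _ => f.toProd.1)
    (fun w hw => SimpleGraph.Dart.mk (w, u) (((G.mem_neighborFinset u w).mp hw).symm))
    ?_ ?_ ?_ ?_ ?_
  · intro f hf
    simp only [Finset.mem_filter] at hf
    rw [G.mem_neighborFinset]
    exact (hf.2 ▸ f.adj).symm
  · intro w hw
    simp
  · intro f hf
    simp only [Finset.mem_filter] at hf
    exact SimpleGraph.Dart.ext _ _ (by simp [hf.2.symm])
  · intro w hw
    rfl
  · intro f hf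
    rfl

lemma mulVec_quantumU {V : Type*} [Fintype V] [DecidableEq V] (G : SimpleGraph V)
    [DecidableRel G.Adj] (F : G.Dart → ℂ) (g : V → ℂ) (e : G.Dart)
    (hF : ∀ f : G.Dart, f.toProd.2 = e.toProd.1 → F f = g f.toProd.1) :
    (quantumU G).mulVec F e =
      (2 / (G.degree e.toProd.1 : ℂ)) * ∑ w ∈ G.neighborFinset e.toProd.1, g w
        - F e.symm := by
  have hsymm : (e.symm).toProd.2 = e.toProd.1 := by
    simp [SimpleGraph.Dart.symm]
  calc (quantumU G).mulVec F e
      = ∑ f : G.Dart, ((if f.toProd.2 = e.toProd.1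
            then (2 / (G.degree e.toProd.1 : ℂ)) * g f.toProd.1 else 0)
          - (if f = e.symm then F e.symm else 0)) := by
        rw [Matrix.mulVec, dotProduct]
        refine Finset.sum_congr rfl fun f _ => ?_
        by_cases h1 : f = e.symm
        · subst h1
          simp only [quantumU, hsymm, hF _ hsymm]
          simp
          rw [hsymm]; ring
        · by_cases h2 : f.toProd.2 = e.toProd.1
          · have hd2 : (G.degree f.toProd.2 : ℂ) = (G.degree e.toProd.1 : ℂ) := by rw [h2]
            rw [hF f h2]
            simp only [quantumU,
              if_pos (show f.toProd.2 = e.toProd.1 ∧ f ≠ e.symm from ⟨h2, h1⟩),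
              if_pos h2, if_neg h1, hd2]
            ring
          · simp only [quantumU, if_neg h1, if_neg h2,
              if_neg (by tauto : ¬(f.toProd.2 = e.toProd.1 ∧ f ≠ e.symm))]
            ring
    _ = _ := by
        rw [Finset.sum_sub_distrib, Finset.sum_ite_eq' Finset.univ e.symm,
          if_pos (Finset.mem_univ _)]
        congr 1
        rw [Finset.mul_sum]
        exact dart_sum G e.toProd.1 (fun w => 2 / (G.degree e.toProd.1 : ℂ) * g w)

theorem stmt5 {V : Type*} [Fintype V] [DecidableEq V] (G : SimpleGraph V)
    [DecidableRel G.Adj] (hconn : G.Connected) (hdeg : ∀ v : V, 1 ≤ G.degree v)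
    (μ : ℂ) (hμ : μ ∈ spectrum ℂ (quantumT G))
    (lam : ℂ) (hlam : lam ^ 2 - 2 * μ * lam + 1 = 0) :
    lam ∈ spectrum ℂ (quantumU G) := by
  obtain ⟨φ, hφ0, hφ⟩ := (matrix_mem_spectrum_iff _ _).mp hμ
  have hdC : ∀ u : V, (G.degree u : ℂ) ≠ 0 := fun u =>
    Nat.cast_ne_zero.mpr (Nat.one_le_iff_ne_zero.mp (hdeg u))
  have hsum : ∀ u : V, ∑ w ∈ G.neighborFinset u, φ w = (G.degree u : ℂ) * (μ * φ u) := by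
    intro u
    have h := congrFun hφ u
    rw [Matrix.mulVec, dotProduct] at h
    simp only [quantumT, Pi.smul_apply, smul_eq_mul, ite_mul, zero_mul] at h
    have hfil : ∑ v : V, (if G.Adj u v then (1:ℂ)/(G.degree u : ℂ) * φ v else 0)
        = (1/(G.degree u : ℂ)) * ∑ w ∈ G.neighborFinset u, φ w := by
      rw [Finset.mul_sum, ← Finset.sum_filter]
      apply Finset.sum_congr _ (fun x _ => rfl)
      ext v
      simp [G.mem_neighborFinset]
    rw [hfil] at h
    rw [one_div, inv_mul_eq_div, div_eq_iff (hdC u)] at h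
    linear_combination h
  rw [matrix_mem_spectrum_iff]
  by_cases hA : ∀ f : G.Dart, φ f.toProd.2 = lam * φ f.toProd.1
  · -- degenerate case : lam^2 = 1, μ = lam, eigenvector f ↦ φ(origin f)
    obtain ⟨u, hu⟩ := Function.ne_iff.mp hφ0
    simp only [Pi.zero_apply] at hu
    obtain ⟨w, hw⟩ := Finset.card_pos.mp (hdeg u)
    have hadj : G.Adj u w := (G.mem_neighborFinset u w).mp hw
    have h1 : φ w = lam * φ u := hA ⟨(u, w), hadj⟩
    have h2 : φ u = lam * φ w := hA (SimpleGraph.Dart.symm ⟨(u, w), hadj⟩)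
    have hl2 : lam * lam = 1 := by
      have h3 : (lam * lam - 1) * φ u = 0 := by linear_combination (-lam) * h1 - h2
      rcases mul_eq_zero.mp h3 with h4 | h4
      · exact sub_eq_zero.mp h4
      · exact absurd h4 hu
    have hml : μ * lam = 1 := by linear_combination (-1/2 : ℂ) * hlam + (1/2 : ℂ) * hl2
    have hμl : μ = lam := by
      calc μ = μ * (lam * lam) := by rw [hl2, mul_one]
        _ = (μ * lam) * lam := by ring
        _ = lam := by rw [hml, one_mul]
    refine ⟨fun f => φ f.toProd.1, ?_, ?_⟩
    · intro hc
      exact hu (congrFun hc (⟨(u, w), hadj⟩ : G.Dart))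
    · funext e
      rw [mulVec_quantumU G _ φ e (fun f _ => rfl), hsum]
      have he : φ ((SimpleGraph.Dart.symm e).toProd.1) = lam * φ e.toProd.1 := by
        have : (SimpleGraph.Dart.symm e).toProd.1 = e.toProd.2 := rfl
        rw [this]; exact hA e
      have hd := hdC e.toProd.1
      simp only [Pi.smul_apply, smul_eq_mul]
      rw [he, hμl]
      field_simp
      ring
  · push_neg at hA
    obtain ⟨f0, hf0⟩ := hA
    refine ⟨fun f => φ f.toProd.2 - lam * φ f.toProd.1, ?_, ?_⟩
    · intro hc
      exact hf0 (sub_eq_zero.mp (congrFun hc f0))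
    · funext e
      rw [mulVec_quantumU G _ (fun w => φ e.toProd.1 - lam * φ w) e
        (fun f hf => by rw [hf])]
      rw [Finset.sum_sub_distrib, ← Finset.mul_sum, hsum, Finset.sum_const]
      have hcard : (G.neighborFinset e.toProd.1).card = G.degree e.toProd.1 := rfl
      rw [hcard, nsmul_eq_mul]
      have he1 : φ ((SimpleGraph.Dart.symm e).toProd.2) = φ e.toProd.1 := rfl
      have he2 : φ ((SimpleGraph.Dart.symm e).toProd.1) = φ e.toProd.2 := rfl
      simp only [Pi.smul_apply, smul_eq_mul, he1, he2]
      have hd := hdC e.toProd.1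
      field_simp
      linear_combination φ e.toProd.1 * hlam
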